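/- Caccioppoli-type bound (3.16) for A-harmonic functions: if ∫_Ω ⟨A(x) ∇u(x), ∇(η²·u)(x)⟩ dx = 0, if ⟨A(x)ξ, ξ⟩ ≤ β‖ξ‖² for a.e. x ∈ Ω and all ξ ∈ ℝ^d, and if ‖∇η(x)‖ ≤ L for all x ∈ Ω, then ∫_Ω ⟨A(x) ∇(η·u)(x), ∇(η·u)(x)⟩ dx ≤ β · L² · ∫_Ω u(x)² dx. -/

import Mathlib

open MeasureTheory
open scoped RealInnerProductSpace

private lemma gradient_mul' {d : ℕ} {f g : EuclideanSpace ℝ (Fin d) → ℝ}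
    {x : EuclideanSpace ℝ (Fin d)} (hf : DifferentiableAt ℝ f x)
    (hg : DifferentiableAt ℝ g x) :
    gradient (fun y => f y * g y) x = f x • gradient g x + g x • gradient f x := by
  unfold gradient
  rw [fderiv_fun_mul hf hg, map_add, _root_.map_smul, _root_.map_smul]

/-- Caccioppoli-type bound (3.16) for `A`-harmonic functions: if
`∫_Ω ⟨A ∇u, ∇(η²u)⟩ = 0`, `⟨A(x)ξ, ξ⟩ ≤ β‖ξ‖²` for a.e. `x ∈ Ω` and all `ξ`, and
`‖∇η(x)‖ ≤ L` on `Ω`, then `∫_Ω ⟨A ∇(ηu), ∇(ηu)⟩ ≤ β L² ∫_Ω u²`. -/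
theorem caccioppoli_bound
    (d : ℕ) (Ω : Set (EuclideanSpace ℝ (Fin d))) (hΩ : IsOpen Ω)
    (β L : ℝ) (hβ : 0 < β) (hL : 0 < L)
    (A : EuclideanSpace ℝ (Fin d) → (EuclideanSpace ℝ (Fin d) →L[ℝ] EuclideanSpace ℝ (Fin d)))
    (hA : ∀ᵐ x ∂(volume.restrict Ω), ∀ ξ ζ : EuclideanSpace ℝ (Fin d), ⟪A x ξ, ζ⟫ = ⟪ξ, A x ζ⟫)
    (hAβ : ∀ᵐ x ∂(volume.restrict Ω), ∀ ξ : EuclideanSpace ℝ (Fin d), ⟪A x ξ, ξ⟫ ≤ β * ‖ξ‖ ^ 2)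
    (u η : EuclideanSpace ℝ (Fin d) → ℝ)
    (hu : ∀ x ∈ Ω, DifferentiableAt ℝ u x)
    (hη : ∀ x ∈ Ω, DifferentiableAt ℝ η x)
    (hgrad : ∀ x ∈ Ω, ‖gradient η x‖ ≤ L)
    (hint1 : IntegrableOn (fun x =>
      ⟪A x (gradient (fun y => η y * u y) x), gradient (fun y => η y * u y) x⟫) Ω)
    (hint2 : IntegrableOn (fun x =>
      ⟪A x (gradient η x), gradient η x⟫ * (u x) ^ 2) Ω)
    (hint3 : IntegrableOn (fun x =>
      ⟪A x (gradient u x), gradient (fun y => (η y) ^ 2 * u y) x⟫) Ω)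
    (hint4 : IntegrableOn (fun x => (u x) ^ 2) Ω)
    (horth : ∫ x in Ω, ⟪A x (gradient u x), gradient (fun y => (η y) ^ 2 * u y) x⟫ = 0) :
    ∫ x in Ω, ⟪A x (gradient (fun y => η y * u y) x), gradient (fun y => η y * u y) x⟫ ≤
      β * L ^ 2 * ∫ x in Ω, (u x) ^ 2 := by
  have hΩm := hΩ.measurableSet
  have hmem : ∀ᵐ x ∂(volume.restrict Ω), x ∈ Ω := ae_restrict_mem hΩm
  have key : ∀ᵐ x ∂(volume.restrict Ω),
      ⟪A x (gradient (fun y => η y * u y) x), gradient (fun y => η y * u y) x⟫ =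
      ⟪A x (gradient u x), gradient (fun y => (η y) ^ 2 * u y) x⟫ +
        ⟪A x (gradient η x), gradient η x⟫ * (u x) ^ 2 := by
    filter_upwards [hmem, hA] with x hx hsym
    have hux := hu x hx
    have hηx := hη x hx
    have h1 : gradient (fun y => η y * u y) x =
        η x • gradient u x + u x • gradient η x := gradient_mul' hηx hux
    have h2 : gradient (fun y => (η y) ^ 2 * u y) x =
        η x • gradient (fun y => η y * u y) x + (η x * u x) • gradient η x := by
      have : (fun y => (η y) ^ 2 * u y) = fun y => η y * (η y * u y) := by
        funext y; ring
      rw [this, gradient_mul' (g := fun y => η y * u y) hηx (hηx.mul hux), h1]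
    have hQU : ⟪A x (gradient η x), gradient u x⟫ =
        ⟪A x (gradient u x), gradient η x⟫ := by
      rw [hsym (gradient η x) (gradient u x), real_inner_comm]
    rw [h1, h2, h1]
    simp only [map_add, _root_.map_smul, inner_add_left, inner_add_right,
      real_inner_smul_left, real_inner_smul_right, smul_add, smul_smul]
    linear_combination (η x * u x) * hQU
  have hbound : ∀ᵐ x ∂(volume.restrict Ω),
      ⟪A x (gradient η x), gradient η x⟫ * (u x) ^ 2 ≤ β * L ^ 2 * (u x) ^ 2 := by
    filter_upwards [hmem, hAβ] with x hx hb
    have h1 := hb (gradient η x)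
    have h2 := hgrad x hx
    have h3 : (0:ℝ) ≤ ‖gradient η x‖ := norm_nonneg _
    have h4 : ‖gradient η x‖ ^ 2 ≤ L ^ 2 := by nlinarith
    have h5 : ⟪A x (gradient η x), gradient η x⟫ ≤ β * L ^ 2 := by nlinarith
    exact mul_le_mul_of_nonneg_right h5 (sq_nonneg _)
  calc ∫ x in Ω, ⟪A x (gradient (fun y => η y * u y) x), gradient (fun y => η y * u y) x⟫
      = ∫ x in Ω, (⟪A x (gradient u x), gradient (fun y => (η y) ^ 2 * u y) x⟫ +
          ⟪A x (gradient η x), gradient η x⟫ * (u x) ^ 2) := integral_congr_ae key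
    _ = (∫ x in Ω, ⟪A x (gradient u x), gradient (fun y => (η y) ^ 2 * u y) x⟫) +
          ∫ x in Ω, ⟪A x (gradient η x), gradient η x⟫ * (u x) ^ 2 :=
        integral_add hint3 hint2
    _ = ∫ x in Ω, ⟪A x (gradient η x), gradient η x⟫ * (u x) ^ 2 := by
        rw [horth, zero_add]
    _ ≤ ∫ x in Ω, β * L ^ 2 * (u x) ^ 2 :=
        integral_mono_ae hint2 (hint4.const_mul _) hbound
    _ = β * L ^ 2 * ∫ x in Ω, (u x) ^ 2 := integral_const_mul _ _
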